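/- Let E be a group, Z a central subgroup of E, and suppose the quotient E/Z is perfect. Given elements g₁,...,g_n, g₁',...,g_n' of E/Z satisfying ∏ᵢ [gᵢ, gᵢ'] = 1, the element ∏ᵢ [g̃ᵢ, g̃ᵢ'] ∈ E, computed with arbitrary lifts g̃ᵢ, g̃ᵢ' ∈ E, lies in Z and does not depend on the choice of lifts. -/

import Mathlib

open scoped commutatorElement

private lemma comm_left_central {E : Type*} [Group E] {a c z : E}
    (hz : ∀ x, x * z = z * x) : ⁅a * z, c⁆ = ⁅a, c⁆ := by
  simp only [commutatorElement_def, mul_inv_rev]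
  calc a * z * c * (z⁻¹ * a⁻¹) * c⁻¹ = a * (z * c) * (z⁻¹ * a⁻¹) * c⁻¹ := by group
    _ = a * (c * z) * (z⁻¹ * a⁻¹) * c⁻¹ := by rw [hz c]
    _ = a * c * a⁻¹ * c⁻¹ := by group

private lemma comm_right_central {E : Type*} [Group E] {a c w : E}
    (hw : ∀ x, x * w = w * x) : ⁅a, c * w⁆ = ⁅a, c⁆ := by
  simp only [commutatorElement_def, mul_inv_rev]
  calc a * (c * w) * a⁻¹ * (w⁻¹ * c⁻¹) = a * c * (w * a⁻¹) * (w⁻¹ * c⁻¹) := by group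
    _ = a * c * (a⁻¹ * w) * (w⁻¹ * c⁻¹) := by rw [hw a⁻¹]
    _ = a * c * a⁻¹ * c⁻¹ := by group

private lemma comm_lift_eq {E : Type*} [Group E] {Z : Subgroup E} [Z.Normal]
    (hZ : Z ≤ Subgroup.center E) {a b c d : E}
    (hab : (a : E ⧸ Z) = b) (hcd : (c : E ⧸ Z) = d) : ⁅a, c⁆ = ⁅b, d⁆ := by
  rw [QuotientGroup.eq] at hab hcd
  have h1 := Subgroup.mem_center_iff.mp (hZ hab)
  have h2 := Subgroup.mem_center_iff.mp (hZ hcd)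
  have hb : b = a * (a⁻¹ * b) := by group
  have hd : d = c * (c⁻¹ * d) := by group
  rw [hb, hd, comm_left_central h1, comm_right_central h2]

theorem central_quotient_commutator_lifts_well_defined
    (E : Type*) [Group E] (Z : Subgroup E) [Z.Normal]
    (hZ : Z ≤ Subgroup.center E)
    (hperf : commutator (E ⧸ Z) = ⊤)
    (n : ℕ) (g g' : Fin n → E ⧸ Z)
    (hrel : (List.ofFn fun i => ⁅g i, g' i⁆).prod = 1)
    (t t' s s' : Fin n → E)
    (ht : ∀ i, (t i : E ⧸ Z) = g i) (ht' : ∀ i, (t' i : E ⧸ Z) = g' i)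
    (hs : ∀ i, (s i : E ⧸ Z) = g i) (hs' : ∀ i, (s' i : E ⧸ Z) = g' i) :
    (List.ofFn fun i => ⁅t i, t' i⁆).prod ∈ Z ∧
      (List.ofFn fun i => ⁅t i, t' i⁆).prod =
        (List.ofFn fun i => ⁅s i, s' i⁆).prod := by
  constructor
  · rw [← QuotientGroup.eq_one_iff]
    have : ((QuotientGroup.mk' Z) (List.ofFn fun i => ⁅t i, t' i⁆).prod)
        = (List.ofFn fun i => ⁅g i, g' i⁆).prod := by
      rw [← List.prod_hom _ (QuotientGroup.mk' Z)]
      congr 1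
      rw [List.map_ofFn]
      congr 1
      funext i
      rw [Function.comp_apply, map_commutatorElement, ← ht i, ← ht' i]
      rfl
    simpa using this.trans hrel
  · have key : (fun i => ⁅t i, t' i⁆) = fun i => ⁅s i, s' i⁆ :=
      funext fun i =>
        comm_lift_eq hZ ((ht i).trans (hs i).symm) ((ht' i).trans (hs' i).symm)
    rw [key]
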